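/- Let p ≥ 1 and (Γ,d) be ν-regular with F-function F satisfying M_{(p+2)ν}^F(0) < ∞. Then for any interaction Φ with ‖Φ‖_F < ∞ and any x, y ∈ Γ, the p-th moment interaction Φ_p(X) = |X|^p Φ(X) satisfies Σ_{X ∋ x,y} ‖Φ_p(X)‖ ≤ κ^{p+2} ‖Φ‖_F Σ_{n ≥ ⌊d(x,y)⌋} (1+n)^{(p+2)ν} F(n). -/

import Mathlib

open scoped ENNReal


private lemma tsum_aux_const_le {α : Type*} {s : Set α} {C : ℝ≥0∞}
    (h : (s.encard : ℝ≥0∞) ≤ C) (c : ℝ≥0∞) :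
    ∑' _ : s, c ≤ C * c := by
  rw [ENNReal.tsum_set_const]
  exact mul_le_mul_left h c


/-- Let `p ≥ 1`, `(Γ,d)` be ν-regular (constant `κ`) with F-function `F`
satisfying `M_{(p+2)ν}^F(0) < ∞`.  Then for any interaction `Φ` with `‖Φ‖_F ≤ NΦ` and any
`x, y ∈ Γ`, the `p`-th moment interaction `Φ_p(X) = |X|^p Φ(X)` satisfies
`∑_{X ∋ x,y} ‖Φ_p(X)‖ ≤ κ^{p+2} NΦ ∑_{n ≥ ⌊d(x,y)⌋} (1+n)^{(p+2)ν} F(n)`. -/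
theorem moment_interaction_sum_bound
    {Γ : Type*} [MetricSpace Γ] [Countable Γ] {A : Type*} [NormedAddCommGroup A]
    (p : ℝ) (hp : 1 ≤ p)
    (F : ℝ → ℝ)
    (hFpos : ∀ r : ℝ, 0 ≤ r → 0 < F r)
    (hFanti : ∀ r s : ℝ, 0 ≤ r → r ≤ s → F s ≤ F r)
    (nF cF NΦ κ ν : ℝ) (hNΦ : 0 ≤ NΦ) (hκ : 0 ≤ κ) (hν : 0 < ν)
    (hFint : ∀ x : Γ, ∑' y : Γ, ENNReal.ofReal (F (dist x y)) ≤ ENNReal.ofReal nF)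
    (hFconv : ∀ x y : Γ, ∑' z : Γ,
        ENNReal.ofReal (F (dist x z)) * ENNReal.ofReal (F (dist z y))
          ≤ ENNReal.ofReal (cF * F (dist x y)))
    (hmom : ∑' n : ℕ, ENNReal.ofReal ((1 + (n : ℝ)) ^ ((p + 2) * ν) * F n) ≠ ⊤)
    (hreg : ∀ (x : Γ) (n : ℕ), 1 ≤ n →
        ({y : Γ | dist x y ≤ (n : ℝ)}).encard ≤ ENNReal.ofReal (κ * (n : ℝ) ^ ν))
    (Φ : Finset Γ → A)
    (hΦ : ∀ x y : Γ, ∑' Z : {Z : Finset Γ // x ∈ Z ∧ y ∈ Z}, (‖Φ Z.1‖₊ : ℝ≥0∞)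
        ≤ ENNReal.ofReal (NΦ * F (dist x y)))
    (x y : Γ) :
    ∑' Z : {Z : Finset Γ // x ∈ Z ∧ y ∈ Z},
        ENNReal.ofReal ((Z.1.card : ℝ) ^ p) * (‖Φ Z.1‖₊ : ℝ≥0∞)
      ≤ ENNReal.ofReal (κ ^ (p + 2) * NΦ) *
          ∑' n : {n : ℕ // ⌊dist x y⌋₊ ≤ n},
            ENNReal.ofReal ((1 + (n.1 : ℝ)) ^ ((p + 2) * ν) * F n.1) := by
  
  classical
  -- κ ≥ 1
  have hκ1 : (1:ℝ) ≤ κ := by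
    have h := hreg x 1 le_rfl
    have h1 : (1 : ℕ∞) ≤ ({y : Γ | dist x y ≤ ((1:ℕ):ℝ)}).encard :=
      Set.one_le_encard_iff_nonempty.2 ⟨x, by simp⟩
    have h2 : (1:ℝ≥0∞) ≤ ENNReal.ofReal (κ * ((1:ℕ):ℝ) ^ ν) :=
      le_trans (by exact_mod_cast h1) h
    rw [show ((1:ℕ):ℝ) = 1 by norm_num, Real.one_rpow, mul_one] at h2
    exact ENNReal.one_le_ofReal.1 h2
  have hκpos : (0:ℝ) < κ := lt_of_lt_of_le one_pos hκ1
  set S := {Z : Finset Γ // x ∈ Z ∧ y ∈ Z} with hS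
  have hne : ∀ Z : S, (Z.1 ×ˢ Z.1).Nonempty :=
    fun Z => ⟨(x,x), Finset.mem_product.2 ⟨Z.2.1, Z.2.1⟩⟩
  set D : S → ℝ := fun Z => (Z.1 ×ˢ Z.1).sup' (hne Z) (fun q => dist q.1 q.2) with hD
  have hDle : ∀ (Z : S) (a b : Γ), a ∈ Z.1 → b ∈ Z.1 → dist a b ≤ D Z := by
    intro Z a b ha hb
    have hm : (a, b) ∈ Z.1 ×ˢ Z.1 := Finset.mem_product.2 ⟨ha, hb⟩
    exact Finset.le_sup' (fun q : Γ × Γ => dist q.1 q.2) hm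
  have hDxy : ∀ Z : S, dist x y ≤ D Z := fun Z => hDle Z x y Z.2.1 Z.2.2
  have hD0 : ∀ Z : S, 0 ≤ D Z := fun Z => dist_nonneg.trans (hDxy Z)
  have hUV : ∀ Z : S, ∃ q : Γ × Γ, q.1 ∈ Z.1 ∧ q.2 ∈ Z.1 ∧ dist q.1 q.2 = D Z := by
    intro Z
    obtain ⟨q, hq, hq'⟩ := Finset.exists_mem_eq_sup' (hne Z) (fun q : Γ × Γ => dist q.1 q.2)
    exact ⟨q, (Finset.mem_product.1 hq).1, (Finset.mem_product.1 hq).2, hq'.symm⟩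
  choose q hq1 hq2 hq3 using hUV
  set nZ : S → ℕ := fun Z => ⌊D Z⌋₊ with hnZ
  -- cardinality bound
  have hcard : ∀ Z : S, (Z.1.card : ℝ) ≤ κ * (1 + (nZ Z : ℝ)) ^ ν := by
    intro Z
    have hsub : (Z.1 : Set Γ) ⊆ {u : Γ | dist x u ≤ ((nZ Z + 1 : ℕ) : ℝ)} := by
      intro a ha
      have h1 : dist x a ≤ D Z := hDle Z x a Z.2.1 ha
      have h2 : D Z < nZ Z + 1 := Nat.lt_floor_add_one _
      simp only [Set.mem_setOf_eq]
      push_cast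
      linarith
    have h1 := hreg x (nZ Z + 1) (Nat.le_add_left 1 _)
    have h2 : ((Z.1.card : ℕ∞) : ℝ≥0∞) ≤ ENNReal.ofReal (κ * ((nZ Z + 1 : ℕ) : ℝ) ^ ν) := by
      refine le_trans ?_ h1
      rw [← Set.encard_coe_eq_coe_finsetCard]
      exact_mod_cast Set.encard_le_encard hsub
    have hnn : (0:ℝ) ≤ κ * ((nZ Z + 1 : ℕ) : ℝ) ^ ν :=
      mul_nonneg hκ (Real.rpow_nonneg (by positivity) _)
    rw [ENat.toENNReal_coe, ← ENNReal.ofReal_natCast,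
      ENNReal.ofReal_le_ofReal_iff hnn] at h2
    have : ((nZ Z + 1 : ℕ) : ℝ) = 1 + (nZ Z : ℝ) := by push_cast; ring
    rwa [this] at h2
  -- per-Z bound
  have hstep1 : ∀ Z : S, ENNReal.ofReal ((Z.1.card : ℝ) ^ p) * (‖Φ Z.1‖₊ : ℝ≥0∞)
      ≤ ENNReal.ofReal (κ ^ p * (1 + (nZ Z : ℝ)) ^ (p * ν)) * ‖Φ Z.1‖₊ := by
    intro Z
    refine mul_le_mul_left (ENNReal.ofReal_le_ofReal ?_) _
    have h0 : (0:ℝ) ≤ 1 + (nZ Z : ℝ) := by positivity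
    calc (Z.1.card : ℝ) ^ p ≤ (κ * (1 + (nZ Z : ℝ)) ^ ν) ^ p :=
          Real.rpow_le_rpow (Nat.cast_nonneg _) (hcard Z) (by linarith)
      _ = κ ^ p * (1 + (nZ Z : ℝ)) ^ (p * ν) := by
          rw [Real.mul_rpow hκ (Real.rpow_nonneg h0 _), ← Real.rpow_mul h0, mul_comm ν p]
  -- counting bound per n
  have hcount : ∀ n : ℕ, ∑' W : {Z : S // nZ Z = n}, (‖Φ W.1.1‖₊ : ℝ≥0∞)
      ≤ ENNReal.ofReal (κ * (1 + (n:ℝ)) ^ ν) *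
          (ENNReal.ofReal (κ * (1 + (n:ℝ)) ^ ν) * ENNReal.ofReal (NΦ * F n)) := by
    intro n
    set s : Set Γ := {u : Γ | dist x u ≤ 1 + (n : ℝ)} with hs
    have hsenc : (s.encard : ℝ≥0∞) ≤ ENNReal.ofReal (κ * (1 + (n:ℝ)) ^ ν) := by
      have h1 := hreg x (n+1) (Nat.le_add_left 1 _)
      have hc : ((n + 1 : ℕ) : ℝ) = 1 + (n : ℝ) := by push_cast; ring
      rwa [hc] at h1
    set T : Γ → Γ → Type _ :=
      fun u v => {Z : Finset Γ // (u ∈ Z ∧ v ∈ Z) ∧ (n:ℝ) ≤ dist u v} with hT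
    have hTle : ∀ u v : Γ, ∑' Z : T u v, (‖Φ Z.1‖₊ : ℝ≥0∞) ≤ ENNReal.ofReal (NΦ * F n) := by
      intro u v
      rcases isEmpty_or_nonempty (T u v) with hE | hNE
      · rw [ENNReal.tsum_eq_zero.2 (fun W => isEmptyElim W)]
        exact zero_le
      · obtain ⟨Z0⟩ := hNE
        have hduv : (n:ℝ) ≤ dist u v := Z0.2.2
        have inj : ∑' Z : T u v, (‖Φ Z.1‖₊ : ℝ≥0∞)
            ≤ ∑' Z : {Z : Finset Γ // u ∈ Z ∧ v ∈ Z}, (‖Φ Z.1‖₊ : ℝ≥0∞) := by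
          have hinj0 : Function.Injective
              (fun Z : T u v => (⟨Z.1, Z.2.1⟩ : {Z : Finset Γ // u ∈ Z ∧ v ∈ Z})) := by
            intro a b h
            have h2 := congrArg Subtype.val h
            exact Subtype.ext h2
          exact ENNReal.tsum_comp_le_tsum_of_injective hinj0
            (fun Z : {Z : Finset Γ // u ∈ Z ∧ v ∈ Z} => (‖Φ Z.1‖₊ : ℝ≥0∞))
        refine inj.trans ((hΦ u v).trans (ENNReal.ofReal_le_ofReal ?_))
        exact mul_le_mul_of_nonneg_left (hFanti n (dist u v) (Nat.cast_nonneg n) hduv) hNΦ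
    -- injection of the fiber into Σ u:s, Σ v:s, T u v
    have hmem : ∀ W : {Z : S // nZ Z = n}, ∀ a ∈ W.1.1.1, a ∈ s := by
      intro W a ha
      have h1 : dist x a ≤ D W.1 := hDle W.1 x a W.1.2.1 ha
      have h2 : D W.1 < nZ W.1 + 1 := Nat.lt_floor_add_one _
      simp only [hs, Set.mem_setOf_eq]
      rw [W.2] at h2
      push_cast at h2
      linarith
    have hdq : ∀ W : {Z : S // nZ Z = n}, (n:ℝ) ≤ dist (q W.1).1 (q W.1).2 := by
      intro W
      rw [hq3 W.1]
      calc (n:ℝ) = (nZ W.1 : ℝ) := by rw [W.2]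
        _ ≤ D W.1 := Nat.floor_le (hD0 W.1)
    set ι : {Z : S // nZ Z = n} → Σ (u : s), Σ (v : s), T u.1 v.1 := fun W =>
      ⟨⟨(q W.1).1, hmem W _ (hq1 W.1)⟩, ⟨(q W.1).2, hmem W _ (hq2 W.1)⟩,
        ⟨W.1.1, ⟨hq1 W.1, hq2 W.1⟩, hdq W⟩⟩ with hι
    have hinj : Function.Injective ι := by
      intro a b h
      have h2 : a.1.1 = b.1.1 :=
        congrArg (fun t : Σ (u : s), Σ (v : s), T u.1 v.1 => t.2.2.1) h
      exact Subtype.ext (Subtype.ext h2)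
    calc ∑' W : {Z : S // nZ Z = n}, (‖Φ W.1.1‖₊ : ℝ≥0∞)
        = ∑' W : {Z : S // nZ Z = n},
            (fun t : Σ (u : s), Σ (v : s), T u.1 v.1 => (‖Φ t.2.2.1‖₊ : ℝ≥0∞)) (ι W) := rfl
      _ ≤ ∑' t : Σ (u : s), Σ (v : s), T u.1 v.1, (‖Φ t.2.2.1‖₊ : ℝ≥0∞) :=
          ENNReal.tsum_comp_le_tsum_of_injective hinj _
      _ = ∑' (u : s), ∑' (v : s), ∑' Z : T u.1 v.1, (‖Φ Z.1‖₊ : ℝ≥0∞) := by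
          rw [ENNReal.tsum_sigma']
          exact tsum_congr fun u => by rw [ENNReal.tsum_sigma']
      _ ≤ ∑' (u : s), ∑' (_ : s), ENNReal.ofReal (NΦ * F n) :=
          Summable.tsum_le_tsum (fun u => Summable.tsum_le_tsum (fun v => hTle _ _)
            ENNReal.summable ENNReal.summable) ENNReal.summable ENNReal.summable
      _ ≤ ∑' (_ : s), ENNReal.ofReal (κ * (1 + (n:ℝ)) ^ ν) * ENNReal.ofReal (NΦ * F n) :=
          Summable.tsum_le_tsum (fun u => tsum_aux_const_le hsenc _) ENNReal.summable ENNReal.summable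
      _ ≤ _ := tsum_aux_const_le hsenc _
  -- the fiber is empty below ⌊dist x y⌋₊
  have hfib0 : ∀ n : ℕ, n < ⌊dist x y⌋₊ → IsEmpty {Z : S // nZ Z = n} := by
    intro n hn
    constructor
    intro W
    have h1 : ⌊dist x y⌋₊ ≤ nZ W.1 := Nat.floor_le_floor (hDxy W.1)
    rw [W.2] at h1
    omega
  set a : ℕ → ℝ≥0∞ := fun n =>
    ENNReal.ofReal (κ ^ p * (1 + (n:ℝ)) ^ (p * ν)) *
      ∑' W : {Z : S // nZ Z = n}, (‖Φ W.1.1‖₊ : ℝ≥0∞) with ha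
  have hsupp : Function.support a ⊆ {n : ℕ | ⌊dist x y⌋₊ ≤ n} := by
    intro n hn
    by_contra hcon
    simp only [Set.mem_setOf_eq, not_le] at hcon
    apply hn
    haveI := hfib0 n hcon
    haveI := hfib0 n hcon
    simp only [ha]
    rw [ENNReal.tsum_eq_zero.2 (fun W => isEmptyElim W), mul_zero]
  have hbound : ∀ n : ℕ, a n ≤ ENNReal.ofReal (κ ^ (p + 2) * NΦ) *
      ENNReal.ofReal ((1 + (n:ℝ)) ^ ((p + 2) * ν) * F n) := by
    intro n
    have h0 : (0:ℝ) < 1 + (n:ℝ) := by positivity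
    have h1 : a n ≤ ENNReal.ofReal (κ ^ p * (1 + (n:ℝ)) ^ (p * ν)) *
        (ENNReal.ofReal (κ * (1 + (n:ℝ)) ^ ν) *
          (ENNReal.ofReal (κ * (1 + (n:ℝ)) ^ ν) * ENNReal.ofReal (NΦ * F n))) :=
      mul_le_mul_right (hcount n) _
    refine h1.trans ?_
    rw [← ENNReal.ofReal_mul (mul_nonneg hκ (Real.rpow_nonneg h0.le _)),
      ← ENNReal.ofReal_mul (mul_nonneg hκ (Real.rpow_nonneg h0.le _)),
      ← ENNReal.ofReal_mul (mul_nonneg (Real.rpow_nonneg hκ _) (Real.rpow_nonneg h0.le _)),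
      ← ENNReal.ofReal_mul (mul_nonneg (Real.rpow_nonneg hκ _) hNΦ)]
    refine ENNReal.ofReal_le_ofReal (le_of_eq ?_)
    have e1 : κ ^ (p + 2) = κ ^ p * (κ * κ) := by
      rw [Real.rpow_add hκpos, show (2:ℝ) = ((2:ℕ):ℝ) by norm_num, Real.rpow_natCast]
      ring
    have e2 : (1 + (n:ℝ)) ^ ((p + 2) * ν)
        = (1 + (n:ℝ)) ^ (p * ν) * ((1 + (n:ℝ)) ^ ν * (1 + (n:ℝ)) ^ ν) := by
      rw [show (p + 2) * ν = p * ν + (ν + ν) by ring, Real.rpow_add h0, Real.rpow_add h0]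
    rw [e1, e2]
    ring
  -- main chain
  calc ∑' Z : S, ENNReal.ofReal ((Z.1.card : ℝ) ^ p) * (‖Φ Z.1‖₊ : ℝ≥0∞)
      ≤ ∑' Z : S, ENNReal.ofReal (κ ^ p * (1 + (nZ Z : ℝ)) ^ (p * ν)) * ‖Φ Z.1‖₊ :=
        Summable.tsum_le_tsum hstep1 ENNReal.summable ENNReal.summable
    _ = ∑' n : ℕ, ∑' W : {Z : S // nZ Z = n},
          ENNReal.ofReal (κ ^ p * (1 + (nZ W.1 : ℝ)) ^ (p * ν)) * ‖Φ W.1.1‖₊ := by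
        rw [← (Equiv.sigmaFiberEquiv nZ).tsum_eq
          (f := fun Z : S => ENNReal.ofReal (κ ^ p * (1 + (nZ Z : ℝ)) ^ (p * ν)) * (‖Φ Z.1‖₊ : ℝ≥0∞)),
          ENNReal.tsum_sigma']
        exact tsum_congr fun n => tsum_congr fun W => rfl
    _ = ∑' n : ℕ, a n := by
        refine tsum_congr fun n => ?_
        have haeq : a n = ENNReal.ofReal (κ ^ p * (1 + (n:ℝ)) ^ (p * ν)) *
            ∑' W : {Z : S // nZ Z = n}, (‖Φ W.1.1‖₊ : ℝ≥0∞) := rfl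
        rw [haeq, ← ENNReal.tsum_mul_left]
        exact tsum_congr fun W => by rw [W.2]
    _ = ∑' n : {n : ℕ // ⌊dist x y⌋₊ ≤ n}, a n.1 :=
        (tsum_subtype_eq_of_support_subset hsupp).symm
    _ ≤ ∑' n : {n : ℕ // ⌊dist x y⌋₊ ≤ n}, ENNReal.ofReal (κ ^ (p + 2) * NΦ) *
          ENNReal.ofReal ((1 + (n.1:ℝ)) ^ ((p + 2) * ν) * F n.1) :=
        Summable.tsum_le_tsum (fun n => hbound n.1) ENNReal.summable ENNReal.summable
    _ = _ := ENNReal.tsum_mul_left
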